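/- Define SPD trees inductively: a leaf carries a positive weight w > 0; an internal node is a serial or parallel composition of a nonempty finite list of SPD trees. Define W(T) recursively by W(leaf w) = w, W(serial [T₁,…,T_k]) = (∑ i, Real.sqrt (W(T_i)))², W(parallel [T₁,…,T_k]) = ∑ i, W(T_i). Given positive shares x assigned to the leaves of T, define Cost(T, x) recursively by Cost(leaf w, x) = w / x(that leaf), Cost(serial [T₁,…,T_k], x) = ∑ i, Cost(T_i, x), Cost(parallel [T₁,…,T_k], x) = max_i Cost(T_i, x). Then for every c > 0 and every assignment x of positive shares to the leaves of T with (sum of all leaf shares) ≤ c, it holds that Cost(T, x) ≥ W(T) / c. -/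

import Mathlib

/-- SPD trees with leaf data `α`: a leaf, or a serial/parallel composition of a list of
SPD trees. -/
inductive SPD (α : Type) : Type
  | leaf : α → SPD α
  | ser : List (SPD α) → SPD α
  | par : List (SPD α) → SPD α

namespace SPD

/-- Map over leaf data. -/
def map {α β : Type} (f : α → β) : SPD α → SPD β
  | leaf a => leaf (f a)
  | ser l => ser (l.attach.map fun t => map f t.1)
  | par l => par (l.attach.map fun t => map f t.1)
termination_by t => sizeOf t
decreasing_by
  all_goals have := List.sizeOf_lt_of_mem t.2; simp [SPD.ser.sizeOf_spec, SPD.par.sizeOf_spec] at *; omega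

/-- The weight `W(T)` computed by `computeWeights`: the weight of a leaf, the squared
sum of square roots at serial nodes, and the sum at parallel nodes. -/
noncomputable def W : SPD ℝ → ℝ
  | leaf w => w
  | ser l => (l.attach.map fun t => Real.sqrt (W t.1)).sum ^ 2
  | par l => (l.attach.map fun t => W t.1).sum
termination_by t => sizeOf t
decreasing_by
  all_goals have := List.sizeOf_lt_of_mem t.2; simp at *; omega

/-- The continuous streaming cost of a tree whose leaves carry (weight, share) pairs:
`w / x` at a leaf, the sum at serial nodes, the maximum at parallel nodes. -/
noncomputable def Cost : SPD (ℝ × ℝ) → ℝ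
  | leaf p => p.1 / p.2
  | ser l => (l.attach.map fun t => Cost t.1).sum
  | par l => (l.attach.map fun t => Cost t.1).foldr max 0
termination_by t => sizeOf t
decreasing_by
  all_goals have := List.sizeOf_lt_of_mem t.2; simp at *; omega

/-- The total share assigned to the leaves. -/
def shareSum : SPD (ℝ × ℝ) → ℝ
  | leaf p => p.2
  | ser l => (l.attach.map fun t => shareSum t.1).sum
  | par l => (l.attach.map fun t => shareSum t.1).sum
termination_by t => sizeOf t
decreasing_by
  all_goals have := List.sizeOf_lt_of_mem t.2; simp at *; omega

/-- Validity: leaf weights and shares are positive, and composition lists are nonempty. -/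
inductive Valid : SPD (ℝ × ℝ) → Prop
  | leaf {p : ℝ × ℝ} : 0 < p.1 → 0 < p.2 → Valid (SPD.leaf p)
  | ser {l} : l ≠ [] → (∀ t ∈ l, Valid t) → Valid (SPD.ser l)
  | par {l} : l ≠ [] → (∀ t ∈ l, Valid t) → Valid (SPD.par l)

end SPD

namespace SPD

lemma map_leaf {α β : Type} (f : α → β) (a : α) : map f (leaf a) = leaf (f a) := by rw [map]
lemma W_leaf (w : ℝ) : W (leaf w) = w := by rw [W]
lemma Cost_leaf (p : ℝ × ℝ) : Cost (leaf p) = p.1 / p.2 := by rw [Cost]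
lemma shareSum_leaf (p : ℝ × ℝ) : shareSum (leaf p) = p.2 := by rw [shareSum]
lemma map_ser {α β : Type} (f : α → β) (l : List (SPD α)) :
    map f (ser l) = ser (l.map (map f)) := by rw [map]; simp
lemma map_par {α β : Type} (f : α → β) (l : List (SPD α)) :
    map f (par l) = par (l.map (map f)) := by rw [map]; simp
lemma W_ser (l : List (SPD ℝ)) :
    W (ser l) = ((l.map fun t => Real.sqrt (W t)).sum) ^ 2 := by rw [W]; simp
lemma W_par (l : List (SPD ℝ)) : W (par l) = (l.map W).sum := by rw [W]; simp
lemma Cost_ser (l : List (SPD (ℝ × ℝ))) :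
    Cost (ser l) = (l.map Cost).sum := by rw [Cost]; simp
lemma Cost_par (l : List (SPD (ℝ × ℝ))) :
    Cost (par l) = (l.map Cost).foldr max 0 := by rw [Cost]; simp
lemma shareSum_ser (l : List (SPD (ℝ × ℝ))) :
    shareSum (ser l) = (l.map shareSum).sum := by rw [shareSum]; simp
lemma shareSum_par (l : List (SPD (ℝ × ℝ))) :
    shareSum (par l) = (l.map shareSum).sum := by rw [shareSum]; simp

end SPD

lemma le_foldr_max (l : List ℝ) (a : ℝ) (ha : a ∈ l) : a ≤ l.foldr max 0 := by
  induction l with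
  | nil => simp at ha
  | cons b t ih =>
    rcases List.mem_cons.mp ha with h | h
    · simp [h, le_max_iff]
    · simp only [List.foldr_cons]; exact le_trans (ih h) (le_max_right _ _)

lemma cauchy_step (a S Q T s : ℝ) (ha : 0 ≤ a) (hS : 0 ≤ S) (hQ : 0 ≤ Q) (hT : 0 ≤ T)
    (hs : 0 < s) (hST : S ^ 2 ≤ Q * T) :
    (a + S) ^ 2 ≤ (a ^ 2 / s + Q) * (s + T) := by
  have h1 : S ≤ Real.sqrt Q * Real.sqrt T := by
    rw [← Real.sqrt_mul_self hS, ← Real.sqrt_mul hQ]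
    exact Real.sqrt_le_sqrt (by nlinarith)
  have hq2 : Real.sqrt Q ^ 2 = Q := Real.sq_sqrt hQ
  have ht2 : Real.sqrt T ^ 2 = T := Real.sq_sqrt hT
  rw [div_add' _ _ _ hs.ne', div_mul_eq_mul_div, le_div_iff₀ hs]
  rw [← hq2, ← ht2] at hST ⊢
  nlinarith [mul_le_mul_of_nonneg_left h1 (show (0:ℝ) ≤ 2*a*s by positivity),
    sq_nonneg (a * Real.sqrt T - s * Real.sqrt Q),
    mul_le_mul_of_nonneg_right hST hs.le]

/-- Cauchy–Schwarz for lists: (∑ √wᵢ)² ≤ (∑ wᵢ/sᵢ)(∑ sᵢ). -/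
lemma cauchy_list (L : List (ℝ × ℝ)) (h : ∀ p ∈ L, 0 < p.1 ∧ 0 < p.2) :
    ((L.map fun p => Real.sqrt p.1).sum) ^ 2 ≤
      (L.map fun p => p.1 / p.2).sum * (L.map fun p => p.2).sum := by
  induction L with
  | nil => simp
  | cons p t ih =>
    have hp := h p (by simp)
    have ht : ∀ q ∈ t, 0 < q.1 ∧ 0 < q.2 := fun q hq => h q (by simp [hq])
    have ihh := ih ht
    have hS : 0 ≤ (t.map fun p => Real.sqrt p.1).sum := by
      apply List.sum_nonneg
      intro x hx
      simp only [List.mem_map] at hx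
      obtain ⟨q, _, rfl⟩ := hx
      exact Real.sqrt_nonneg _
    have hQ : 0 ≤ (t.map fun p => p.1 / p.2).sum := by
      apply List.sum_nonneg
      intro x hx
      simp only [List.mem_map] at hx
      obtain ⟨q, hq, rfl⟩ := hx
      exact div_nonneg (ht q hq).1.le (ht q hq).2.le
    have hT : 0 ≤ (t.map fun p => p.2).sum := by
      apply List.sum_nonneg
      intro x hx
      simp only [List.mem_map] at hx
      obtain ⟨q, hq, rfl⟩ := hx
      exact (ht q hq).2.le
    simp only [List.map_cons, List.sum_cons]
    have key := cauchy_step (Real.sqrt p.1) _ _ _ p.2 (Real.sqrt_nonneg _) hS hQ hT hp.2 ihh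
    rw [Real.sq_sqrt hp.1.le] at key
    linarith [key]

open SPD in
lemma key_lemma : ∀ n (A : SPD (ℝ × ℝ)), sizeOf A ≤ n → Valid A →
    0 < shareSum A ∧ 0 < W (map Prod.fst A) ∧
      W (map Prod.fst A) / shareSum A ≤ Cost A := by
  intro n
  induction n with
  | zero => intro A hA; cases A <;> simp at hA
  | succ n ih =>
    intro A hsz hV
    cases hV with
    | @leaf p h1 h2 =>
      rw [map_leaf, W_leaf, Cost_leaf, shareSum_leaf]
      exact ⟨h2, h1, le_refl _⟩
    | @ser l hne hl =>
      have hsub : ∀ t ∈ l, 0 < shareSum t ∧ 0 < W (map Prod.fst t) ∧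
          W (map Prod.fst t) / shareSum t ≤ Cost t := by
        intro t htl
        refine ih t ?_ (hl t htl)
        have := List.sizeOf_lt_of_mem htl
        simp only [SPD.ser.sizeOf_spec] at hsz; omega
      rw [map_ser, W_ser, Cost_ser, shareSum_ser, List.map_map]
      set L : List (ℝ × ℝ) := l.map fun t => (W (map Prod.fst t), shareSum t) with hL
      have hLpos : ∀ p ∈ L, 0 < p.1 ∧ 0 < p.2 := by
        intro p hp; rw [hL] at hp; simp only [List.mem_map] at hp
        obtain ⟨t, htl, rfl⟩ := hp
        exact ⟨(hsub t htl).2.1, (hsub t htl).1⟩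
      have hC := cauchy_list L hLpos
      have e1 : (L.map fun p => Real.sqrt p.1).sum
          = (l.map ((fun t => Real.sqrt (W t)) ∘ map Prod.fst)).sum := by
        rw [hL, List.map_map]; rfl
      have e2 : (L.map fun p => p.2).sum = (l.map shareSum).sum := by
        rw [hL, List.map_map]; rfl
      rw [e1, e2] at hC
      have hs : 0 < (l.map shareSum).sum := by
        obtain ⟨t, htl⟩ := List.exists_mem_of_ne_nil l hne
        have : ∀ x ∈ l.map shareSum, 0 ≤ x := by
          intro x hx; simp only [List.mem_map] at hx
          obtain ⟨q, hq, rfl⟩ := hx; exact (hsub q hq).1.le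
        calc 0 < shareSum t := (hsub t htl).1
          _ ≤ (l.map shareSum).sum := List.single_le_sum this _ (List.mem_map_of_mem htl)
      have hwpos : 0 < (l.map ((fun t => Real.sqrt (W t)) ∘ map Prod.fst)).sum ^ 2 := by
        obtain ⟨t, htl⟩ := List.exists_mem_of_ne_nil l hne
        have hpos : 0 < Real.sqrt (W (map Prod.fst t)) := Real.sqrt_pos.mpr (hsub t htl).2.1
        have : ∀ x ∈ l.map ((fun t => Real.sqrt (W t)) ∘ map Prod.fst), 0 ≤ x := by
          intro x hx; simp only [List.mem_map] at hx
          obtain ⟨q, _, rfl⟩ := hx; exact Real.sqrt_nonneg _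
        have h0 : 0 < (l.map ((fun t => Real.sqrt (W t)) ∘ map Prod.fst)).sum :=
          lt_of_lt_of_le hpos (List.single_le_sum this _ (List.mem_map_of_mem htl))
        positivity
      refine ⟨hs, hwpos, ?_⟩
      rw [div_le_iff₀ hs]
      have hsum_div : (L.map fun p => p.1 / p.2).sum ≤ (l.map Cost).sum := by
        rw [hL, List.map_map]
        apply List.sum_le_sum
        intro t htl
        exact (hsub t htl).2.2
      calc (l.map ((fun t => Real.sqrt (W t)) ∘ map Prod.fst)).sum ^ 2
          ≤ (L.map fun p => p.1 / p.2).sum * (l.map shareSum).sum := hC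
        _ ≤ (l.map Cost).sum * (l.map shareSum).sum :=
            mul_le_mul_of_nonneg_right hsum_div hs.le
    | @par l hne hl =>
      have hsub : ∀ t ∈ l, 0 < shareSum t ∧ 0 < W (map Prod.fst t) ∧
          W (map Prod.fst t) / shareSum t ≤ Cost t := by
        intro t htl
        refine ih t ?_ (hl t htl)
        have := List.sizeOf_lt_of_mem htl
        simp only [SPD.par.sizeOf_spec] at hsz; omega
      rw [map_par, W_par, Cost_par, shareSum_par, List.map_map]
      set M := (l.map Cost).foldr max 0 with hM
      have hs : 0 < (l.map shareSum).sum := by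
        obtain ⟨t, htl⟩ := List.exists_mem_of_ne_nil l hne
        have : ∀ x ∈ l.map shareSum, 0 ≤ x := by
          intro x hx; simp only [List.mem_map] at hx
          obtain ⟨q, hq, rfl⟩ := hx; exact (hsub q hq).1.le
        calc 0 < shareSum t := (hsub t htl).1
          _ ≤ (l.map shareSum).sum := List.single_le_sum this _ (List.mem_map_of_mem htl)
      have hW : 0 < (l.map (W ∘ map Prod.fst)).sum := by
        obtain ⟨t, htl⟩ := List.exists_mem_of_ne_nil l hne
        have : ∀ x ∈ l.map (W ∘ map Prod.fst), 0 ≤ x := by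
          intro x hx; simp only [List.mem_map] at hx
          obtain ⟨q, hq, rfl⟩ := hx; exact (hsub q hq).2.1.le
        calc 0 < W (map Prod.fst t) := (hsub t htl).2.1
          _ ≤ _ := List.single_le_sum this _ (List.mem_map_of_mem htl)
      refine ⟨hs, hW, ?_⟩
      rw [div_le_iff₀ hs]
      have hbound : ∀ t ∈ l, W (map Prod.fst t) ≤ M * shareSum t := by
        intro t htl
        have h1 : Cost t ≤ M := le_foldr_max _ _ (List.mem_map_of_mem htl)
        have h2 := (hsub t htl).2.2
        have h3 := (hsub t htl).1
        rw [div_le_iff₀ h3] at h2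
        calc W (map Prod.fst t) ≤ Cost t * shareSum t := h2
          _ ≤ M * shareSum t := mul_le_mul_of_nonneg_right h1 h3.le
      calc (l.map (W ∘ map Prod.fst)).sum ≤ (l.map fun t => M * shareSum t).sum := by
            apply List.sum_le_sum; intro t htl; exact hbound t htl
        _ = M * (l.map shareSum).sum := by
            rw [← List.sum_map_mul_left]


/-- Optimality of `𝒜^cont`, lower-bound part: for every SPD tree `A` with positive leaf
weights and positive leaf shares (nonempty compositions) whose shares sum to at most
`c > 0`, the continuous streaming cost is at least `W(T)/c`, where `T` is the underlying
weight tree. -/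
theorem cost_ge_W_div_c (A : SPD (ℝ × ℝ)) (hA : SPD.Valid A)
    (c : ℝ) (hc : 0 < c) (hsum : SPD.shareSum A ≤ c) :
    SPD.W (SPD.map Prod.fst A) / c ≤ SPD.Cost A := by
  obtain ⟨hs, hW, hle⟩ := key_lemma (sizeOf A) A le_rfl hA
  calc SPD.W (SPD.map Prod.fst A) / c ≤ SPD.W (SPD.map Prod.fst A) / SPD.shareSum A :=
        div_le_div_of_nonneg_left hW.le hs hsum
    _ ≤ SPD.Cost A := hle
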